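/- For every n ≥ 2 and every field F, the restriction of the Lie module Lie_F(n) to the subgroup 𝔖_{n−1} ≤ 𝔖_n is isomorphic to the regular F𝔖_{n−1}-module; i.e., F𝔖_n·ω_n is free of rank 1 as an F𝔖_{n−1}-module. -/

import Mathlib

/-- The partial Dynkin–Specht–Wever element `(1-c_2)(1-c_3)⋯(1-c_m)` inside `F𝔖_n`,
where `c_k` is the backward cycle `(k, k-1, …, 2, 1)` of `𝔖_n` (in zero-based indexing,
`c_k` is the inverse of `Fin.cycleRange (k-1)`). -/
noncomputable def dswPartial (F : Type*) [Field F] (n m : ℕ) :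
    MonoidAlgebra F (Equiv.Perm (Fin n)) :=
  (((List.finRange n).take m).tail.map
    (fun j => (1 : MonoidAlgebra F (Equiv.Perm (Fin n))) -
      MonoidAlgebra.of F (Equiv.Perm (Fin n)) (Fin.cycleRange j)⁻¹)).prod

/-- The Dynkin–Specht–Wever element `ω_n = (1-c_2)(1-c_3)⋯(1-c_n) ∈ F𝔖_n`; `ω_1 = 1`. -/
noncomputable def dsw (F : Type*) [Field F] (n : ℕ) :
    MonoidAlgebra F (Equiv.Perm (Fin n)) :=
  dswPartial F n n


open MonoidAlgebra Equiv List

section CycleLemmas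
variable {N : ℕ}

lemma cycleRange_inv_zero (i : Fin (N+1)) : (Fin.cycleRange i)⁻¹ 0 = i := by
  rw [← Fin.cycleRange_self i, Equiv.Perm.inv_def, Equiv.symm_apply_apply]

lemma cycleRange_inv_of_gt {i j : Fin (N+1)} (h : i < j) : (Fin.cycleRange i)⁻¹ j = j := by
  nth_rewrite 1 [← Fin.cycleRange_of_gt h]
  rw [Equiv.Perm.inv_def, Equiv.symm_apply_apply]

lemma cycleRange_inv_of_lt {i k : Fin (N+1)} (h : k < i) : (Fin.cycleRange i)⁻¹ (k + 1) = k := by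
  rw [← Fin.cycleRange_of_lt h, Equiv.Perm.inv_def, Equiv.symm_apply_apply]

lemma fin_mk_succ_eq_add_one {jj : ℕ} (h : jj + 1 < N + 1) :
    (⟨jj + 1, h⟩ : Fin (N+1)) = (⟨jj, by omega⟩ : Fin (N+1)) + 1 := by
  have : (⟨jj, by omega⟩ : Fin (N+1)) < Fin.last N := by
    simp [Fin.lt_iff_val_lt_val, Fin.last]; omega
  apply Fin.ext
  rw [Fin.val_add_one_of_lt this]

lemma cycleRange_inv_mk_of_le {m jj : ℕ} (hm : m < N + 1) (h1 : 1 ≤ jj) (h2 : jj ≤ m) :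
    (Fin.cycleRange (⟨m, hm⟩ : Fin (N+1)))⁻¹ ⟨jj, by omega⟩ = ⟨jj - 1, by omega⟩ := by
  have hjj : jj - 1 + 1 = jj := by omega
  have : (⟨jj, by omega⟩ : Fin (N+1)) = (⟨jj - 1, by omega⟩ : Fin (N+1)) + 1 := by
    rw [← fin_mk_succ_eq_add_one (by omega)]
    simp [hjj]
  rw [this, cycleRange_inv_of_lt]
  simp [Fin.lt_iff_val_lt_val]; omega

lemma cycleRange_inv_mk_of_gt {m jj : ℕ} (hm : m < N + 1) (h : m < jj) (hj : jj < N + 1) :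
    (Fin.cycleRange (⟨m, hm⟩ : Fin (N+1)))⁻¹ ⟨jj, hj⟩ = ⟨jj, hj⟩ :=
  cycleRange_inv_of_gt (by simp [Fin.lt_iff_val_lt_val]; omega)

end CycleLemmas

section DswRec
variable (F : Type*) [Field F] {N : ℕ}

lemma take_finRange_succ {m : ℕ} (hm : m < N + 1) :
    (List.finRange (N+1)).take (m+1) = (List.finRange (N+1)).take m ++ [⟨m, hm⟩] := by
  rw [List.take_succ]
  congr 1
  have hl : m < (List.finRange (N+1)).length := by simp [hm]
  rw [List.getElem?_eq_getElem hl]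
  simp [List.getElem_finRange, Fin.cast]

lemma take_finRange_ne_nil {m : ℕ} (hm : 1 ≤ m) : (List.finRange (N+1)).take m ≠ [] := by
  apply List.ne_nil_of_length_pos
  simp; omega

lemma dswPartial_succ {m : ℕ} (h1 : 1 ≤ m) (hm : m < N + 1) :
    dswPartial F (N+1) (m+1) = dswPartial F (N+1) m *
      (1 - MonoidAlgebra.of F (Equiv.Perm (Fin (N+1))) (Fin.cycleRange (⟨m, hm⟩ : Fin (N+1)))⁻¹) := by
  unfold dswPartial
  rw [take_finRange_succ hm, List.tail_append_of_ne_nil (take_finRange_ne_nil h1),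
    List.map_append, List.prod_append]
  simp

lemma dswPartial_one : dswPartial F (N+1) 1 = 1 := by
  unfold dswPartial
  rw [take_finRange_succ (by omega : 0 < N+1)]
  simp

end DswRec
section SpanMachinery
variable (F : Type*) [Field F] {G : Type*} [Group G]

/-- Span of the image of a set of group elements. -/
noncomputable def sOf (s : Set G) : Submodule F (MonoidAlgebra F G) :=
  Submodule.span F (MonoidAlgebra.of F G '' s)

variable {F}

lemma of_mem_sOf {s : Set G} {g : G} (hg : g ∈ s) : MonoidAlgebra.of F G g ∈ sOf F s :=
  Submodule.subset_span ⟨g, hg, rfl⟩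

lemma sOf_mono {s t : Set G} (h : s ⊆ t) : sOf F s ≤ sOf F t :=
  Submodule.span_mono (Set.image_mono h)

lemma mul_of_mem_sOf {s t : Set G} {a : MonoidAlgebra F G} {g : G}
    (ha : a ∈ sOf F s) (hmul : ∀ h ∈ s, h * g ∈ t) :
    a * MonoidAlgebra.of F G g ∈ sOf F t := by
  have : Submodule.map (LinearMap.mulRight F (MonoidAlgebra.of F G g)) (sOf F s) ≤ sOf F t := by
    rw [sOf, Submodule.map_span, Submodule.span_le]
    rintro _ ⟨_, ⟨h, hh, rfl⟩, rfl⟩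
    have : MonoidAlgebra.of F G h * MonoidAlgebra.of F G g = MonoidAlgebra.of F G (h * g) := by
      simp [MonoidAlgebra.of_apply, MonoidAlgebra.single_mul_single]
    simpa [LinearMap.mulRight_apply, this] using
      of_mem_sOf (F := F) (hmul h hh)
  exact this ⟨a, ha, rfl⟩

lemma mul_mem_sOf {s t : Set G} {a b : MonoidAlgebra F G}
    (ha : a ∈ sOf F s) (hb : b ∈ sOf F t) :
    a * b ∈ sOf F (Set.image2 (· * ·) s t) := by
  have : Submodule.map (LinearMap.mulLeft F a) (sOf F t) ≤ sOf F (Set.image2 (· * ·) s t) := by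
    rw [sOf, Submodule.map_span, Submodule.span_le]
    rintro _ ⟨_, ⟨h, hh, rfl⟩, rfl⟩
    simp only [LinearMap.mulLeft_apply]
    exact mul_of_mem_sOf ha (fun u hu => Set.mem_image2_of_mem hu hh)
  exact this ⟨b, hb, rfl⟩

lemma apply_eq_zero_of_sOf {s : Set G} {a : MonoidAlgebra F G} (ha : a ∈ sOf F s)
    {u : G} (hu : ∀ h ∈ s, h ≠ u) : a.coeff u = 0 := by
  have : sOf F s ≤ LinearMap.ker ((Finsupp.lapply u (R := F) (M := F)) ∘ₗ
      (MonoidAlgebra.coeffLinearEquiv F).toLinearMap) := by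
    rw [sOf, Submodule.span_le]
    rintro _ ⟨h, hh, rfl⟩
    simp only [SetLike.mem_coe, LinearMap.mem_ker, Finsupp.lapply_apply, LinearMap.comp_apply,
      LinearEquiv.coe_coe, MonoidAlgebra.coeffLinearEquiv_apply, MonoidAlgebra.of_apply,
      MonoidAlgebra.coeff_single]
    exact Finsupp.single_eq_of_ne (hu h hh).symm
  simpa using this ha

end SpanMachinery

section Support
variable (F : Type*) [Field F] {N : ℕ}

/-- Permutations fixing all points with index `≥ m`. -/
def Hset (N m : ℕ) : Set (Equiv.Perm (Fin (N+1))) :=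
  {h | ∀ j : Fin (N+1), m ≤ (j : ℕ) → h j = j}

/-- Permutations fixing all points `≥ m` and moving `0`. -/
def Bset (N m : ℕ) : Set (Equiv.Perm (Fin (N+1))) :=
  {h | h 0 ≠ 0 ∧ h ∈ Hset N m}

lemma one_mem_Hset (m : ℕ) : (1 : Equiv.Perm (Fin (N+1))) ∈ Hset N m := fun _ _ => rfl

lemma cycleRange_inv_mem_Bset {m : ℕ} (h1 : 1 ≤ m) (hm : m < N + 1) :
    (Fin.cycleRange (⟨m, hm⟩ : Fin (N+1)))⁻¹ ∈ Bset N (m+1) := by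
  constructor
  · rw [cycleRange_inv_zero]
    simp only [ne_eq, Fin.ext_iff, Fin.val_zero]
    omega
  · intro j hj
    rcases j with ⟨jj, hjj⟩
    have hj' : m < jj := by simpa using hj
    exact cycleRange_inv_mk_of_gt hm hj' hjj

lemma dswPartial_sub_one_mem {m : ℕ} (hm : m ≤ N + 1) :
    dswPartial F (N+1) m - 1 ∈ sOf F (Bset N m) := by
  induction m with
  | zero => simp [dswPartial]
  | succ m ih =>
    rcases Nat.eq_zero_or_pos m with h1 | h1
    · subst h1; rw [dswPartial_one]; simp
    · have hmlt : m < N + 1 := by omega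
      have ihm := ih (by omega)
      have key : dswPartial F (N+1) (m+1) - 1 =
          (dswPartial F (N+1) m - 1) -
          MonoidAlgebra.of F _ (Fin.cycleRange (⟨m, hmlt⟩ : Fin (N+1)))⁻¹ -
          (dswPartial F (N+1) m - 1) *
          MonoidAlgebra.of F _ (Fin.cycleRange (⟨m, hmlt⟩ : Fin (N+1)))⁻¹ := by
        rw [dswPartial_succ F h1 hmlt]; noncomm_ring
      rw [key]
      have hBH : Bset N m ⊆ Bset N (m+1) := by
        rintro h ⟨h0, hfix⟩
        exact ⟨h0, fun j hj => hfix j (by omega)⟩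
      refine Submodule.sub_mem _ (Submodule.sub_mem _ (sOf_mono hBH ihm)
        (of_mem_sOf (cycleRange_inv_mem_Bset h1 hmlt))) ?_
      refine mul_of_mem_sOf ihm ?_
      rintro h ⟨h0, hfix⟩
      constructor
      · rw [Equiv.Perm.mul_apply, cycleRange_inv_zero, hfix ⟨m, hmlt⟩ (le_refl m)]
        simp only [ne_eq, Fin.ext_iff, Fin.val_zero]
        omega
      · intro j hj
        rcases j with ⟨jj, hjj⟩
        have hj' : m + 1 ≤ jj := by simpa using hj
        rw [Equiv.Perm.mul_apply, cycleRange_inv_mk_of_gt hmlt (by omega) hjj,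
          hfix _ (by simp; omega)]

lemma dswPartial_mem_Hset {m : ℕ} (hm : m ≤ N + 1) :
    dswPartial F (N+1) m ∈ sOf F (Hset N m) := by
  have h : dswPartial F (N+1) m = (dswPartial F (N+1) m - 1) + 1 := by noncomm_ring
  rw [h]
  refine Submodule.add_mem _ (sOf_mono (fun h hh => hh.2) (dswPartial_sub_one_mem F hm)) ?_
  simpa [MonoidAlgebra.one_def] using of_mem_sOf (F := F) (one_mem_Hset m)

end Support
section LieSpan
variable (F : Type*) [Field F] {A : Type*} [Ring A] [Algebra F A]

/-- Left-normed bracketing starting from `p`. -/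
def lbl (p : A) (l : List A) : A := l.foldl (fun q a => q * a - a * q) p

lemma lbl_nil (p : A) : lbl p [] = p := rfl

lemma lbl_append (p : A) (u v : List A) : lbl p (u ++ v) = lbl (lbl p u) v :=
  List.foldl_append

lemma lbl_cons (p : A) (b : A) (v : List A) : lbl p (b :: v) = lbl (p * b - b * p) v := rfl

lemma lbl_concat (p : A) (u : List A) (b : A) :
    lbl p (u ++ [b]) = lbl p u * b - b * lbl p u := by
  rw [lbl_append]; rfl

/-- `lbl · v` as a linear map. -/
noncomputable def lblMap (v : List A) : A →ₗ[F] A :=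
  v.foldl (fun φ a => (LinearMap.mulRight F a - LinearMap.mulLeft F a) ∘ₗ φ) LinearMap.id

lemma lblMap_apply (v : List A) (p : A) : lblMap F v p = lbl p v := by
  suffices h : ∀ (v : List A) (φ : A →ₗ[F] A) (p : A),
      (v.foldl (fun φ a => (LinearMap.mulRight F a - LinearMap.mulLeft F a) ∘ₗ φ) φ) p
        = lbl (φ p) v by
    simpa [lblMap] using h v LinearMap.id p
  intro v
  induction v with
  | nil => intro φ p; rfl
  | cons b v ih =>
    intro φ p
    rw [List.foldl_cons, ih]
    rfl

/-- Span of left-normed brackets headed by `y` over lists with letter multiset `M`. -/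
noncomputable def Sspan (y : A) (M : Multiset A) : Submodule F A :=
  Submodule.span F {z | ∃ l : List A, (l : Multiset A) = M ∧ z = lbl y l}

lemma Sspan_gen {y : A} {M : Multiset A} {l : List A} (h : (l : Multiset A) = M) :
    lbl y l ∈ Sspan F y M :=
  Submodule.subset_span ⟨l, h, rfl⟩

variable {F}

lemma Sspan_bracket {y b z : A} {M : Multiset A} (hz : z ∈ Sspan F y M) :
    z * b - b * z ∈ Sspan F y (M + {b}) := by
  have : Submodule.map (LinearMap.mulRight F b - LinearMap.mulLeft F b) (Sspan F y M)
      ≤ Sspan F y (M + {b}) := by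
    rw [Sspan, Submodule.map_span, Submodule.span_le]
    rintro _ ⟨_, ⟨l, hl, rfl⟩, rfl⟩
    have h2 : ((l ++ [b] : List A) : Multiset A) = M + {b} := by
      rw [← Multiset.coe_singleton, ← Multiset.coe_add, hl]
    have h3 : lbl y l * b - b * lbl y l = lbl y (l ++ [b]) := (lbl_concat y l b).symm
    simpa [LinearMap.sub_apply, LinearMap.mulRight_apply, LinearMap.mulLeft_apply, h3] using
      Sspan_gen F (y := y) h2
  exact this ⟨z, hz, rfl⟩

lemma Sspan_lbl {y z : A} {M : Multiset A} (hz : z ∈ Sspan F y M) (v : List A) :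
    lbl z v ∈ Sspan F y (M + v) := by
  induction v generalizing M z with
  | nil => simpa [lbl_nil] using hz
  | cons b v ih =>
    rw [lbl_cons]
    have h1 := ih (Sspan_bracket (b := b) hz)
    have h2 : (M + {b}) + (v : Multiset A) = M + (b :: v : List A) := by
      simp only [← Multiset.cons_coe, ← Multiset.singleton_add]
      abel
    rwa [h2] at h1

lemma Sspan_neg {y z : A} {M : Multiset A} (hz : z ∈ Sspan F y M) : -z ∈ Sspan F y M :=
  Submodule.neg_mem _ hz

lemma Sspan_key (y : A) : ∀ (w : List A) (p : A) (l : List A),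
    lbl y l * lbl p w - lbl p w * lbl y l ∈ Sspan F y ((l : Multiset A) + (p ::ₘ (w : Multiset A))) := by
  intro w
  induction w using List.reverseRecOn with
  | nil =>
    intro p l
    have h2 : ((l ++ [p] : List A) : Multiset A) = (l : Multiset A) + (p ::ₘ (↑([]:List A))) := by
      simp [← Multiset.coe_singleton, ← Multiset.coe_add]
    simpa [lbl_nil, lbl_concat] using Sspan_gen F (y := y) h2
  | append_singleton w b ih =>
    intro p l
    have hY : lbl p (w ++ [b]) = lbl p w * b - b * lbl p w := lbl_concat p w b
    set X := lbl p w with hX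
    set L := lbl y l with hL
    set Wc := L * X - X * L with hW
    set Z := lbl y (l ++ [b]) with hZ
    have hZ' : Z = L * b - b * L := by rw [hZ, lbl_concat, hL]
    have hid : L * lbl p (w ++ [b]) - lbl p (w ++ [b]) * L =
        (Wc * b - b * Wc) - (Z * X - X * Z) := by
      rw [hY, hW, hZ']; noncomm_ring
    rw [hid]
    have m1 : Wc * b - b * Wc ∈ Sspan F y (((l : Multiset A) + (p ::ₘ (w : Multiset A))) + {b}) :=
      Sspan_bracket (ih p l)
    have m2 : Z * X - X * Z ∈ Sspan F y (((l ++ [b] : List A) : Multiset A) + (p ::ₘ (w : Multiset A))) := by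
      rw [hZ, hX]; exact ih p (l ++ [b])
    have e1 : ((l : Multiset A) + (p ::ₘ (w : Multiset A))) + {b}
        = (l : Multiset A) + (p ::ₘ ((w ++ [b] : List A) : Multiset A)) := by
      simp only [← Multiset.coe_add, ← Multiset.singleton_add, ← Multiset.coe_singleton]
      abel
    have e2 : ((l ++ [b] : List A) : Multiset A) + (p ::ₘ (w : Multiset A))
        = (l : Multiset A) + (p ::ₘ ((w ++ [b] : List A) : Multiset A)) := by
      simp only [← Multiset.coe_add, ← Multiset.singleton_add, ← Multiset.coe_singleton]
      abel
    rw [e1] at m1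
    rw [e2] at m2
    exact Submodule.sub_mem _ m1 m2

lemma Sspan_main (y a : A) (u v : List A) :
    lbl a (u ++ y :: v) ∈ Sspan F y ((a ::ₘ (u : Multiset A)) + v) := by
  have hsplit : u ++ y :: v = (u ++ [y]) ++ v := by simp
  rw [hsplit, lbl_append]
  have hz : lbl y ([] : List A) * lbl a u - lbl a u * lbl y ([] : List A)
      ∈ Sspan F y ((([]:List A) : Multiset A) + (a ::ₘ (u : Multiset A))) := Sspan_key y u a []
  simp only [lbl_nil, Multiset.coe_nil, zero_add] at hz
  have hneg : lbl a (u ++ [y]) = -(y * lbl a u - lbl a u * y) := by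
    rw [lbl_concat]; noncomm_ring
  rw [hneg]
  have h2 := Sspan_lbl (Sspan_neg hz) v
  simpa using h2
end LieSpan
section PreMaps
variable (F : Type*) [Field F] {N : ℕ}

/-- Prefix word of a permutation: letters at positions `0,…,m-1`. -/
def preW (N m : ℕ) (h : Equiv.Perm (Fin (N+1))) : FreeMonoid (Fin (N+1)) :=
  FreeMonoid.ofList (((List.finRange (N+1)).take m).map h)

/-- The linear prefix-word map. -/
noncomputable def PreL (N m : ℕ) :
    MonoidAlgebra F (Equiv.Perm (Fin (N+1))) →ₗ[F] MonoidAlgebra F (FreeMonoid (Fin (N+1))) :=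
  MonoidAlgebra.mapDomainLinearMap F F (preW N m)

/-- A letter as an element of the free-monoid algebra. -/
noncomputable def lett (j : Fin (N+1)) : MonoidAlgebra F (FreeMonoid (Fin (N+1))) :=
  MonoidAlgebra.of F (FreeMonoid (Fin (N+1))) (FreeMonoid.of j)

lemma PreL_of (m : ℕ) (g : Equiv.Perm (Fin (N+1))) :
    PreL F N m (MonoidAlgebra.of F (Equiv.Perm (Fin (N+1))) g)
      = MonoidAlgebra.of F (FreeMonoid (Fin (N+1))) (preW N m g) := by
  simp only [PreL, MonoidAlgebra.mapDomainLinearMap_single, MonoidAlgebra.of_apply]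

lemma fin_zero_mk (h : 0 < N + 1) : (⟨0, h⟩ : Fin (N+1)) = 0 := rfl

lemma preW_succ {m : ℕ} (hm : m < N + 1) (h : Equiv.Perm (Fin (N+1))) :
    preW N (m+1) h = preW N m h * FreeMonoid.of (h ⟨m, hm⟩) := by
  unfold preW
  rw [take_finRange_succ hm, List.map_append, FreeMonoid.ofList_append]
  simp

lemma preW_one (h : Equiv.Perm (Fin (N+1))) : preW N 1 h = FreeMonoid.of (h 0) := by
  unfold preW
  rw [take_finRange_succ (by omega : 0 < N+1)]
  simp [fin_zero_mk]

lemma L1gen {m : ℕ} (hm : m < N + 1) (g : Equiv.Perm (Fin (N+1)))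
    {s : Equiv.Perm (Fin (N+1))} (hs : s ∈ Hset N m) :
    preW N (m+1) (g * s) = preW N m (g * s) * FreeMonoid.of (g ⟨m, hm⟩) := by
  rw [preW_succ hm]
  congr 2
  rw [Equiv.Perm.mul_apply, hs ⟨m, hm⟩ (le_refl m)]

lemma L2gen {m : ℕ} (h1 : 1 ≤ m) (hm : m < N + 1) (g : Equiv.Perm (Fin (N+1)))
    {s : Equiv.Perm (Fin (N+1))} (hs : s ∈ Hset N m) :
    preW N (m+1) (g * s * (Fin.cycleRange (⟨m, hm⟩ : Fin (N+1)))⁻¹)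
      = FreeMonoid.of (g ⟨m, hm⟩) * preW N m (g * s) := by
  unfold preW
  have hlist : ((List.finRange (N+1)).take (m+1)).map (g * s * (Fin.cycleRange (⟨m, hm⟩ : Fin (N+1)))⁻¹)
      = (g ⟨m, hm⟩) :: ((List.finRange (N+1)).take m).map (g * s) := by
    apply List.ext_getElem
    · simp; omega
    · intro jj hjj1 hjj2
      have hjlt : jj < m + 1 := by simp at hjj1; omega
      have hjN : jj < N + 1 := by omega
      have hTake : ∀ (k : ℕ) (hk : k ≤ N+1) (jx : ℕ) (hjx : jx < k)
          (hh : jx < ((List.finRange (N+1)).take k).length),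
          GetElem.getElem ((List.finRange (N+1)).take k) jx hh = ⟨jx, by omega⟩ := by
        intro k hk jx hjx hh
        rw [List.getElem_take, List.getElem_finRange]
        simp [Fin.cast_mk]
      rw [List.getElem_map, hTake (m+1) (by omega) jj hjlt]
      rcases Nat.eq_zero_or_pos jj with h0 | h0
      · subst h0
        rw [List.getElem_cons_zero, Equiv.Perm.mul_apply, Equiv.Perm.mul_apply]
        rw [fin_zero_mk, cycleRange_inv_zero, hs ⟨m, hm⟩ (le_refl m)]
      · obtain ⟨jj', rfl⟩ : ∃ t, jj = t + 1 := ⟨jj - 1, by omega⟩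
        rw [List.getElem_cons_succ, List.getElem_map, hTake m (by omega) jj' (by omega)]
        rw [Equiv.Perm.mul_apply, cycleRange_inv_mk_of_le hm (by omega) (by omega)]
        simp [Equiv.Perm.mul_apply]
  rw [hlist, ← FreeMonoid.ofList_singleton, ← FreeMonoid.ofList_append]
  rfl

lemma L1span {m : ℕ} (hm : m < N + 1) (g : Equiv.Perm (Fin (N+1)))
    {f : MonoidAlgebra F (Equiv.Perm (Fin (N+1)))} (hf : f ∈ sOf F (Hset N m)) :
    PreL F N (m+1) (MonoidAlgebra.of F _ g * f)
      = PreL F N m (MonoidAlgebra.of F _ g * f) * lett F (g ⟨m, hm⟩) := by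
  set φ := (PreL F N (m+1)) ∘ₗ (LinearMap.mulLeft F (MonoidAlgebra.of F _ g)) with hφ
  set ψ := (LinearMap.mulRight F (lett F (g ⟨m, hm⟩))) ∘ₗ (PreL F N m) ∘ₗ
      (LinearMap.mulLeft F (MonoidAlgebra.of F _ g)) with hψ
  have : sOf F (Hset N m) ≤ LinearMap.eqLocus φ ψ := by
    rw [sOf, Submodule.span_le]
    rintro _ ⟨s, hs, rfl⟩
    show φ _ = ψ _
    rw [hφ, hψ]
    simp only [LinearMap.comp_apply, LinearMap.mulLeft_apply, LinearMap.mulRight_apply]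
    rw [← map_mul (MonoidAlgebra.of F (Equiv.Perm (Fin (N+1)))) g s, PreL_of, PreL_of,
      L1gen hm g hs, lett]
    rw [map_mul (MonoidAlgebra.of F (FreeMonoid (Fin (N+1))))]
  exact this hf

lemma L2span {m : ℕ} (h1 : 1 ≤ m) (hm : m < N + 1) (g : Equiv.Perm (Fin (N+1)))
    {f : MonoidAlgebra F (Equiv.Perm (Fin (N+1)))} (hf : f ∈ sOf F (Hset N m)) :
    PreL F N (m+1) (MonoidAlgebra.of F _ g * f *
        MonoidAlgebra.of F _ (Fin.cycleRange (⟨m, hm⟩ : Fin (N+1)))⁻¹)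
      = lett F (g ⟨m, hm⟩) * PreL F N m (MonoidAlgebra.of F _ g * f) := by
  set d := (Fin.cycleRange (⟨m, hm⟩ : Fin (N+1)))⁻¹ with hd
  set φ := (PreL F N (m+1)) ∘ₗ (LinearMap.mulRight F (MonoidAlgebra.of F _ d)) ∘ₗ
      (LinearMap.mulLeft F (MonoidAlgebra.of F _ g)) with hφ
  set ψ := (LinearMap.mulLeft F (lett F (g ⟨m, hm⟩))) ∘ₗ (PreL F N m) ∘ₗ
      (LinearMap.mulLeft F (MonoidAlgebra.of F _ g)) with hψ
  have : sOf F (Hset N m) ≤ LinearMap.eqLocus φ ψ := by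
    rw [sOf, Submodule.span_le]
    rintro _ ⟨s, hs, rfl⟩
    show φ _ = ψ _
    rw [hφ, hψ]
    simp only [LinearMap.comp_apply, LinearMap.mulLeft_apply, LinearMap.mulRight_apply]
    rw [← map_mul (MonoidAlgebra.of F (Equiv.Perm (Fin (N+1)))) g s,
      ← map_mul (MonoidAlgebra.of F (Equiv.Perm (Fin (N+1)))) (g*s) d, PreL_of, PreL_of,
      hd, L2gen h1 hm g hs, lett]
    rw [map_mul (MonoidAlgebra.of F (FreeMonoid (Fin (N+1))))]
  exact this hf

/-- The left-normed bracketing of the first `m` letters of the word of `g`. -/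
noncomputable def brkW (N m : ℕ) (F : Type*) [Field F] (g : Equiv.Perm (Fin (N+1))) :
    MonoidAlgebra F (FreeMonoid (Fin (N+1))) :=
  lbl (lett F (g 0)) ((((List.finRange (N+1)).take m).tail).map (fun j => lett F (g j)))

lemma master {m : ℕ} (h1 : 1 ≤ m) (hm : m ≤ N + 1) (g : Equiv.Perm (Fin (N+1))) :
    PreL F N m (MonoidAlgebra.of F _ g * dswPartial F (N+1) m) = brkW N m F g := by
  induction m with
  | zero => omega
  | succ m ih =>
    rcases Nat.eq_zero_or_pos m with h0 | h0
    · subst h0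
      rw [dswPartial_one, mul_one, PreL_of, preW_one, brkW]
      rw [take_finRange_succ (by omega : 0 < N+1)]
      simp [lbl_nil, lett, fin_zero_mk]
    · have hmlt : m < N + 1 := by omega
      have ihm := ih h0 (by omega)
      rw [dswPartial_succ F h0 hmlt]
      have hexp : MonoidAlgebra.of F _ g * (dswPartial F (N+1) m *
          (1 - MonoidAlgebra.of F (Equiv.Perm (Fin (N+1))) (Fin.cycleRange (⟨m, hmlt⟩ : Fin (N+1)))⁻¹))
          = MonoidAlgebra.of F _ g * dswPartial F (N+1) m -
            MonoidAlgebra.of F _ g * dswPartial F (N+1) m *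
            MonoidAlgebra.of F (Equiv.Perm (Fin (N+1))) (Fin.cycleRange (⟨m, hmlt⟩ : Fin (N+1)))⁻¹ := by
        noncomm_ring
      rw [hexp, map_sub]
      rw [L1span F hmlt g (dswPartial_mem_Hset F (by omega)),
        L2span F h0 hmlt g (dswPartial_mem_Hset F (by omega)), ihm]
      rw [brkW, brkW, take_finRange_succ hmlt,
        List.tail_append_of_ne_nil (take_finRange_ne_nil h0), List.map_append]
      rw [show ((([⟨m, hmlt⟩] : List (Fin (N+1))).map (fun j => lett F (g j))))
          = [lett F (g ⟨m, hmlt⟩)] from rfl]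
      rw [lbl_concat]

end PreMaps
section Assembly
variable (F : Type*) [Field F] {N : ℕ}

lemma mul_apply_eq_zero_of_sOf {G : Type*} [Group G] {s : Set G}
    {r : MonoidAlgebra F G} (hr : r ∈ sOf F s) (b : MonoidAlgebra F G) {u : G}
    (hb : ∀ h ∈ s, b.coeff (u * h⁻¹) = 0) : (b * r).coeff u = 0 := by
  refine Submodule.span_induction ?_ ?_ ?_ ?_ hr
  · rintro _ ⟨h, hh, rfl⟩
    rw [MonoidAlgebra.of_apply, MonoidAlgebra.coeff_mul_single_apply]
    simpa using hb h hh
  · simp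
  · intro x y _ _ hx hy
    rw [mul_add, MonoidAlgebra.coeff_add, Finsupp.add_apply, hx, hy, add_zero]
  · intro a x _ hx
    rw [mul_smul_comm, MonoidAlgebra.coeff_smul, Finsupp.smul_apply, hx, smul_zero]

lemma finRange_take_all : (List.finRange (N+1)).take (N+1) = List.finRange (N+1) :=
  List.take_of_length_le (by simp)

lemma preW_top_injective : Function.Injective (preW N (N+1)) := by
  intro h h' hhh
  unfold preW at hhh
  rw [finRange_take_all] at hhh
  have hl : (List.finRange (N+1)).map h = (List.finRange (N+1)).map h' :=
    FreeMonoid.ofList.injective hhh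
  apply Equiv.ext
  intro x
  rcases x with ⟨jj, hjj⟩
  have h1 : jj < ((List.finRange (N+1)).map h).length := by simpa using hjj
  have h2 : jj < ((List.finRange (N+1)).map h').length := by simpa using hjj
  have := congrArg (fun L : List (Fin (N+1)) => L[jj]?) hl
  simp only [List.getElem?_eq_getElem h1, List.getElem?_eq_getElem h2] at this
  have := Option.some.inj this
  rwa [List.getElem_map, List.getElem_map, List.getElem_finRange, Fin.cast_mk] at this

lemma lett_injective : Function.Injective (lett F (N := N)) := by
  intro a b hab
  unfold lett at hab
  simp only [MonoidAlgebra.of_apply] at hab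
  exact FreeMonoid.of_injective (MonoidAlgebra.single_left_injective one_ne_zero hab)

lemma list_map_lift {α β : Type*} [DecidableEq α] {f : α → β} (hf : Function.Injective f) :
    ∀ (l : List β) (M : Multiset α), (l : Multiset β) = Multiset.map f M →
    ∃ l' : List α, l = l'.map f ∧ (l' : Multiset α) = M := by
  intro l
  induction l with
  | nil =>
    intro M hM
    refine ⟨[], rfl, ?_⟩
    have : Multiset.map f M = 0 := by rw [← hM]; rfl
    rw [Multiset.map_eq_zero] at this
    simp [this]
  | cons a t ih =>
    intro M hM
    have ha : a ∈ Multiset.map f M := by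
      rw [← hM]
      exact Multiset.mem_coe.mpr (List.mem_cons_self (a := a) (l := t))
    obtain ⟨b, hb, rfl⟩ := Multiset.mem_map.mp ha
    have hM' : M = b ::ₘ M.erase b := (Multiset.cons_erase hb).symm
    rw [hM', Multiset.map_cons] at hM
    have ht : (t : Multiset β) = Multiset.map f (M.erase b) := by
      have h2 : (f b ::ₘ (t : Multiset β)) = f b ::ₘ Multiset.map f (M.erase b) := by
        rw [← hM]; rfl
      rwa [Multiset.cons_inj_right] at h2
    obtain ⟨l', hl1, hl2⟩ := ih (M.erase b) ht
    exact ⟨b :: l', by simp [hl1], by rw [hM']; simp [← hl2]⟩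

/-- The embedding of the group algebra of the stabilizer. -/
noncomputable def kapL (i : Fin (N+1)) :
    MonoidAlgebra F ↥(MulAction.stabilizer (Equiv.Perm (Fin (N+1))) i) →ₗ[F]
      MonoidAlgebra F (Equiv.Perm (Fin (N+1))) :=
  MonoidAlgebra.mapDomainLinearMap F F (⇑(MulAction.stabilizer (Equiv.Perm (Fin (N+1))) i).subtype)

/-- The comparison map `x ↦ κ(x)·c·ω`. -/
noncomputable def PhiL (N : ℕ) (i : Fin (N+1)) :
    MonoidAlgebra F ↥(MulAction.stabilizer (Equiv.Perm (Fin (N+1))) i) →ₗ[F]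
      MonoidAlgebra F (Equiv.Perm (Fin (N+1))) :=
  (LinearMap.mulRight F (MonoidAlgebra.of F (Equiv.Perm (Fin (N+1))) (Fin.cycleRange i)⁻¹ *
    dsw F (N+1))) ∘ₗ kapL F i

lemma kapL_of (i : Fin (N+1)) (σ : ↥(MulAction.stabilizer (Equiv.Perm (Fin (N+1))) i)) :
    kapL F i (MonoidAlgebra.of F _ σ) = MonoidAlgebra.of F _ (σ : Equiv.Perm (Fin (N+1))) := by
  simp only [kapL, MonoidAlgebra.mapDomainLinearMap_single, MonoidAlgebra.of_apply]
  rfl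

lemma kapL_mul (i : Fin (N+1)) (x y : MonoidAlgebra F ↥(MulAction.stabilizer (Equiv.Perm (Fin (N+1))) i)) :
    kapL F i (x * y) = kapL F i x * kapL F i y := by
  simp only [kapL]
  exact MonoidAlgebra.mapDomain_mul (MulAction.stabilizer (Equiv.Perm (Fin (N+1))) i).subtype x y

lemma kapL_apply_coe (i : Fin (N+1)) (x : MonoidAlgebra F ↥(MulAction.stabilizer (Equiv.Perm (Fin (N+1))) i))
    (τ : ↥(MulAction.stabilizer (Equiv.Perm (Fin (N+1))) i)) :
    (kapL F i x).coeff (τ : Equiv.Perm (Fin (N+1))) = x.coeff τ := by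
  simp only [kapL, MonoidAlgebra.coeff_mapDomainLinearMap]
  exact Finsupp.mapDomain_apply Subtype.coe_injective x.coeff τ

lemma kapL_apply_notin (i : Fin (N+1)) (x : MonoidAlgebra F ↥(MulAction.stabilizer (Equiv.Perm (Fin (N+1))) i))
    {u : Equiv.Perm (Fin (N+1))} (hu : u i ≠ i) : (kapL F i x).coeff u = 0 := by
  simp only [kapL, MonoidAlgebra.coeff_mapDomainLinearMap]
  apply Finsupp.notMem_support_iff.mp
  intro hmem
  have := Finsupp.mapDomain_support hmem
  simp only [Finset.mem_image] at this
  obtain ⟨σ, _, hσ⟩ := this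
  apply hu
  rw [← hσ]
  have := σ.2
  rw [MulAction.mem_stabilizer_iff] at this
  exact this

lemma PhiL_apply (i : Fin (N+1)) (x : MonoidAlgebra F ↥(MulAction.stabilizer (Equiv.Perm (Fin (N+1))) i)) :
    PhiL F N i x = kapL F i x * (MonoidAlgebra.of F (Equiv.Perm (Fin (N+1))) (Fin.cycleRange i)⁻¹ *
      dsw F (N+1)) := rfl

lemma PhiL_of_mul (i : Fin (N+1)) (h : ↥(MulAction.stabilizer (Equiv.Perm (Fin (N+1))) i))
    (x : MonoidAlgebra F ↥(MulAction.stabilizer (Equiv.Perm (Fin (N+1))) i)) :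
    PhiL F N i (MonoidAlgebra.of F _ h * x)
      = MonoidAlgebra.of F _ (h : Equiv.Perm (Fin (N+1))) * PhiL F N i x := by
  rw [PhiL_apply, PhiL_apply, kapL_mul, kapL_of, mul_assoc]

end Assembly
section Inj
variable (F : Type*) [Field F] {N : ℕ}

lemma PhiL_injective {i : Fin (N+1)} (hi : (i : ℕ) = N) :
    Function.Injective (PhiL F N i) := by
  rw [injective_iff_map_eq_zero]
  intro x hx
  rcases i with ⟨iv, hivlt⟩
  have hiv : N = iv := by simpa using hi.symm
  subst hiv
  set c : Equiv.Perm (Fin (N+1)) := (Fin.cycleRange (⟨N, hivlt⟩ : Fin (N+1)))⁻¹ with hc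
  have hsplit : PhiL F N ⟨N, hivlt⟩ x = kapL F ⟨N, hivlt⟩ x * MonoidAlgebra.of F _ c
      + (kapL F ⟨N, hivlt⟩ x * MonoidAlgebra.of F _ c) * (dsw F (N+1) - 1) := by
    rw [PhiL_apply]; noncomm_ring
  have hr : dsw F (N+1) - 1 ∈ sOf F (Bset N (N+1)) :=
    dswPartial_sub_one_mem F (le_refl (N+1))
  refine MonoidAlgebra.ext (Finsupp.ext fun τ => ?_)
  have hA : (kapL F ⟨N, hivlt⟩ x * MonoidAlgebra.of F _ c).coeff
      ((τ : Equiv.Perm (Fin (N+1))) * c) = x.coeff τ := by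
    rw [MonoidAlgebra.of_apply, MonoidAlgebra.coeff_mul_single_apply, mul_inv_cancel_right,
      kapL_apply_coe, mul_one]
  have hB : ((kapL F ⟨N, hivlt⟩ x * MonoidAlgebra.of F _ c) * (dsw F (N+1) - 1)).coeff
      ((τ : Equiv.Perm (Fin (N+1))) * c) = 0 := by
    refine mul_apply_eq_zero_of_sOf F hr _ ?_
    intro h hh
    rw [MonoidAlgebra.of_apply, MonoidAlgebra.coeff_mul_single_apply]
    have hbad : ((τ : Equiv.Perm (Fin (N+1))) * c * h⁻¹ * c⁻¹) ⟨N, hivlt⟩ ≠ ⟨N, hivlt⟩ := by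
      obtain ⟨h0ne, hfix⟩ := hh
      have hcinv : c⁻¹ = Fin.cycleRange (⟨N, hivlt⟩ : Fin (N+1)) := by rw [hc, inv_inv]
      have e1 : c⁻¹ ⟨N, hivlt⟩ = 0 := by
        rw [hcinv]; exact Fin.cycleRange_self (⟨N, hivlt⟩ : Fin (N+1))
      have htne : h⁻¹ 0 ≠ 0 := by
        intro h0
        apply h0ne
        have h2 := congrArg h h0
        rw [Equiv.Perm.inv_def, Equiv.apply_symm_apply] at h2
        exact h2.symm
      rcases htt : h⁻¹ 0 with ⟨tt, htlt⟩
      have htt1 : 1 ≤ tt := by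
        rcases Nat.eq_zero_or_pos tt with h' | h'
        · exfalso; apply htne; rw [htt]; subst h'; rfl
        · exact h'
      have hct : c ⟨tt, htlt⟩ = ⟨tt - 1, by omega⟩ := by
        rw [hc]; exact cycleRange_inv_mk_of_le hivlt htt1 (by omega)
      simp only [Equiv.Perm.mul_apply]
      rw [e1, htt, hct]
      intro hcontra
      have hτi : (τ : Equiv.Perm (Fin (N+1))) ⟨N, hivlt⟩ = ⟨N, hivlt⟩ := by
        have := τ.2
        rwa [MulAction.mem_stabilizer_iff, Equiv.Perm.smul_def] at this
      have h3 := (τ : Equiv.Perm (Fin (N+1))).injective (hcontra.trans hτi.symm)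
      have : tt - 1 = N := by simpa using congrArg Fin.val h3
      omega
    rw [kapL_apply_notin F ⟨N, hivlt⟩ x hbad, zero_mul]
  have h0 : (PhiL F N ⟨N, hivlt⟩ x).coeff ((τ : Equiv.Perm (Fin (N+1))) * c) = x.coeff τ := by
    rw [hsplit, MonoidAlgebra.coeff_add, Finsupp.add_apply, hA, hB, add_zero]
  rw [hx] at h0
  simpa using h0.symm

end Inj
section BrkSpan
variable (F : Type*) [Field F] {N : ℕ}

lemma brk_mem_span {i : Fin (N+1)} (hi : (i : ℕ) = N) (g : Equiv.Perm (Fin (N+1))) :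
    brkW N (N+1) F g ∈ Submodule.span F (Set.range
      (fun σ : ↥(MulAction.stabilizer (Equiv.Perm (Fin (N+1))) i) =>
        brkW N (N+1) F ((σ : Equiv.Perm (Fin (N+1))) * (Fin.cycleRange i)⁻¹))) := by
  classical
  rcases i with ⟨iv, hivlt⟩
  have hiv : N = iv := by simpa using hi.symm
  subst hiv
  set y : MonoidAlgebra F (FreeMonoid (Fin (N+1))) := lett F ⟨N, hivlt⟩ with hy
  set c : Equiv.Perm (Fin (N+1)) := (Fin.cycleRange (⟨N, hivlt⟩ : Fin (N+1)))⁻¹ with hc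
  have hbrk : ∀ h : Equiv.Perm (Fin (N+1)), brkW N (N+1) F h
      = lbl (lett F (h 0)) (((List.finRange (N+1)).tail).map (fun j => lett F (h j))) := by
    intro h; rw [brkW, finRange_take_all]
  have htail : (List.finRange (N+1)).tail = (List.finRange N).map Fin.succ := by
    rw [List.finRange_succ]
    rfl
  have hWlist : ∀ h : Equiv.Perm (Fin (N+1)),
      (List.finRange (N+1)).map (fun j => lett F (h j))
      = lett F (h 0) :: ((List.finRange (N+1)).tail).map (fun j => lett F (h j)) := by
    intro h
    conv_lhs => rw [List.finRange_succ]
    rw [htail]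
    rfl
  have hWmult : ∀ h : Equiv.Perm (Fin (N+1)),
      (((List.finRange (N+1)).map (fun j => lett F (h j))) : Multiset _)
      = Multiset.map (lett F) (↑(List.finRange (N+1)) : Multiset (Fin (N+1))) := by
    intro h
    have h1 : (↑(List.finRange (N+1)) : Multiset (Fin (N+1)))
        = (Finset.univ : Finset (Fin (N+1))).val := by rw [Fin.univ_def]
    have huniv : (↑((List.finRange (N+1)).map h) : Multiset (Fin (N+1)))
        = ↑(List.finRange (N+1)) := by
      calc (↑((List.finRange (N+1)).map h) : Multiset (Fin (N+1)))
          = Multiset.map (⇑h) ↑(List.finRange (N+1)) := (Multiset.map_coe _ _).symm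
        _ = Multiset.map (⇑h.toEmbedding) (Finset.univ : Finset (Fin (N+1))).val := by
            rw [h1]; rfl
        _ = (Finset.map h.toEmbedding Finset.univ).val := by rw [Finset.map_val]
        _ = (Finset.univ : Finset (Fin (N+1))).val := by rw [Finset.map_univ_equiv]
        _ = ↑(List.finRange (N+1)) := h1.symm
    calc (((List.finRange (N+1)).map (fun j => lett F (h j))) : Multiset _)
        = ↑(((List.finRange (N+1)).map h).map (lett F)) := by rw [List.map_map]; rfl
      _ = Multiset.map (lett F) ↑((List.finRange (N+1)).map h) := (Multiset.map_coe _ _)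
      _ = Multiset.map (lett F) (↑(List.finRange (N+1)) : Multiset (Fin (N+1))) := by rw [huniv]
  obtain ⟨M, hM, hmem⟩ : ∃ M : Multiset (MonoidAlgebra F (FreeMonoid (Fin (N+1)))),
      (y ::ₘ M = Multiset.map (lett F) (↑(List.finRange (N+1)) : Multiset (Fin (N+1)))) ∧
      brkW N (N+1) F g ∈ Sspan F y M := by
    by_cases hg0 : g 0 = ⟨N, hivlt⟩
    · refine ⟨↑(((List.finRange (N+1)).tail).map (fun j => lett F (g j))), ?_, ?_⟩
      · rw [← hWmult g, hWlist g, hg0, hy, Multiset.cons_coe]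
      · rw [hbrk g, hg0]
        exact Sspan_gen F rfl
    · have hj0 : g (g⁻¹ ⟨N, hivlt⟩) = ⟨N, hivlt⟩ := g.apply_symm_apply _
      have hj0ne : g⁻¹ ⟨N, hivlt⟩ ≠ 0 := by
        intro h0; apply hg0; rw [← hj0, h0]
      have hmemtail : y ∈ ((List.finRange (N+1)).tail).map (fun j => lett F (g j)) := by
        rw [htail]
        refine List.mem_map.mpr ⟨g⁻¹ ⟨N, hivlt⟩, ?_, by rw [hj0, hy]⟩
        rcases hj0v : g⁻¹ (⟨N, hivlt⟩ : Fin (N+1)) with ⟨jj, hjj⟩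
        have hjj1 : 1 ≤ jj := by
          rcases Nat.eq_zero_or_pos jj with h' | h'
          · exfalso; apply hj0ne; rw [hj0v]; subst h'; rfl
          · exact h'
        refine List.mem_map.mpr ⟨⟨jj - 1, by omega⟩, List.mem_finRange _, ?_⟩
        rw [Fin.succ_mk]
        apply Fin.ext
        simp
        omega
      obtain ⟨u, v, huv⟩ := List.append_of_mem hmemtail
      refine ⟨(lett F (g 0) ::ₘ ↑u) + ↑v, ?_, ?_⟩
      · rw [← hWmult g, hWlist g, huv]
        simp only [← Multiset.cons_coe, ← Multiset.coe_add, ← Multiset.singleton_add]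
        abel
      · rw [hbrk g, huv]
        exact Sspan_main y (lett F (g 0)) u v
  have hle : Sspan F y M ≤ Submodule.span F (Set.range
      (fun σ : ↥(MulAction.stabilizer (Equiv.Perm (Fin (N+1))) (⟨N, hivlt⟩ : Fin (N+1))) =>
        brkW N (N+1) F ((σ : Equiv.Perm (Fin (N+1))) * c))) := by
    rw [Sspan, Submodule.span_le]
    rintro _ ⟨l, hl, rfl⟩
    have hyl : ((y :: l : List _) : Multiset _)
        = Multiset.map (lett F) (↑(List.finRange (N+1)) : Multiset (Fin (N+1))) := by
      rw [← hM, ← hl, Multiset.cons_coe]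
    obtain ⟨l'', hl''1, hl''2⟩ :=
      list_map_lift (lett_injective F) (y :: l) (↑(List.finRange (N+1)) : Multiset (Fin (N+1))) hyl
    rcases l'' with _ | ⟨i0, l'⟩
    · simp at hl''1
    · rw [List.map_cons] at hl''1
      have h1 : y = lett F i0 := (List.cons_eq_cons.mp hl''1).1
      have h2 : l = l'.map (lett F) := (List.cons_eq_cons.mp hl''1).2
      have hii : i0 = ⟨N, hivlt⟩ := lett_injective F (h1.symm.trans hy)
      subst hii
      have hfin := hl''2
      set L := l' ++ [(⟨N, hivlt⟩ : Fin (N+1))] with hL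
      have hLperm : (↑L : Multiset (Fin (N+1))) = ↑(List.finRange (N+1)) := by
        rw [← hfin, hL]
        simp only [← Multiset.cons_coe, ← Multiset.coe_add, ← Multiset.singleton_add,
          Multiset.coe_nil]
        abel
      have hLp : L.Perm (List.finRange (N+1)) := Multiset.coe_eq_coe.mp hLperm
      have hLlen : L.length = N+1 := by simpa using hLp.length_eq
      have hLnodup : L.Nodup := hLp.nodup_iff.mpr (List.nodup_finRange _)
      have hLmem : ∀ x, x ∈ L := fun x => (hLp.mem_iff).mpr (List.mem_finRange x)
      have hl'len : l'.length = N := by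
        rw [hL] at hLlen; simp at hLlen; omega
      let σ0 := hLnodup.getEquivOfForallMemList L hLmem
      let σ : Equiv.Perm (Fin (N+1)) := (finCongr hLlen.symm).trans σ0
      have hσ : ∀ (jj : ℕ) (hjj : jj < N+1), σ ⟨jj, hjj⟩ = L[jj]'(by omega) := by
        intro jj hjj; rfl
      have hσi : σ ⟨N, hivlt⟩ = ⟨N, hivlt⟩ := by
        rw [hσ N (by omega), List.getElem_append_right (by omega : l'.length ≤ N)]
        simp [hl'len]
      have hσstab : σ ∈ MulAction.stabilizer (Equiv.Perm (Fin (N+1))) (⟨N, hivlt⟩ : Fin (N+1)) := by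
        rw [MulAction.mem_stabilizer_iff]; exact hσi
      refine Submodule.subset_span ⟨⟨σ, hσstab⟩, ?_⟩
      show brkW N (N+1) F (σ * c) = lbl y l
      rw [hbrk]
      have hhead : (σ * c) 0 = ⟨N, hivlt⟩ := by
        rw [Equiv.Perm.mul_apply, hc, cycleRange_inv_zero]
        exact hσi
      have htaileq : ((List.finRange (N+1)).tail).map (fun j => lett F ((σ * c) j)) = l := by
        rw [h2]
        apply List.ext_getElem
        · simp [hl'len]
        · intro jj hjj1 hjj2
          have hjjN : jj < N := by
            simp only [List.length_map, List.length_tail, List.length_finRange] at hjj1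
            omega
          rw [List.getElem_map, List.getElem_map, List.getElem_tail,
            List.getElem_finRange, Fin.cast_mk]
          congr 1
          rw [Equiv.Perm.mul_apply]
          have hcv : c (⟨jj + 1, by omega⟩ : Fin (N+1)) = (⟨jj, by omega⟩ : Fin (N+1)) := by
            show (Fin.cycleRange (⟨N, hivlt⟩ : Fin (N+1)))⁻¹ ⟨jj + 1, by omega⟩
              = (⟨jj, by omega⟩ : Fin (N+1))
            have h5 := cycleRange_inv_mk_of_le (N := N) hivlt (jj := jj+1) (by omega) (by omega)
            exact h5.trans (by apply Fin.ext; simp)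
          rw [hcv, hσ jj (by omega)]
          exact List.getElem_append_left (by omega)
      rw [hhead, htaileq, ← hy]
  exact hle hmem

end BrkSpan
section Final
variable (F : Type*) [Field F] {N : ℕ}

lemma of_mul_dsw_mem_range {i : Fin (N+1)} (hi : (i : ℕ) = N)
    (g : Equiv.Perm (Fin (N+1))) :
    MonoidAlgebra.of F (Equiv.Perm (Fin (N+1))) g * dsw F (N+1)
      ∈ LinearMap.range (PhiL F N i) := by
  classical
  set c : Equiv.Perm (Fin (N+1)) := (Fin.cycleRange i)⁻¹ with hc
  set T : Submodule F (MonoidAlgebra F (Equiv.Perm (Fin (N+1)))) :=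
    Submodule.span F (Set.range
      (fun σ : ↥(MulAction.stabilizer (Equiv.Perm (Fin (N+1))) i) =>
        MonoidAlgebra.of F (Equiv.Perm (Fin (N+1))) ((σ : Equiv.Perm (Fin (N+1))) * c) *
          dsw F (N+1))) with hT
  have hmaster : ∀ h : Equiv.Perm (Fin (N+1)),
      PreL F N (N+1) (MonoidAlgebra.of F _ h * dsw F (N+1)) = brkW N (N+1) F h :=
    fun h => master F (by omega) (le_refl (N+1)) h
  have hinj : Function.Injective (PreL F N (N+1)) := by
    have hfun : ⇑(PreL F N (N+1)) = MonoidAlgebra.mapDomain (preW N (N+1)) := by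
      funext z; rfl
    rw [hfun]
    exact MonoidAlgebra.mapDomain_injective (preW_top_injective)
  have hmem : MonoidAlgebra.of F (Equiv.Perm (Fin (N+1))) g * dsw F (N+1) ∈ T := by
    have hmap : PreL F N (N+1) (MonoidAlgebra.of F _ g * dsw F (N+1))
        ∈ Submodule.map (PreL F N (N+1)) T := by
      rw [hT, Submodule.map_span, ← Set.range_comp]
      have hcomp : (⇑(PreL F N (N+1)) ∘ fun σ : ↥(MulAction.stabilizer (Equiv.Perm (Fin (N+1))) i) =>
          MonoidAlgebra.of F (Equiv.Perm (Fin (N+1))) ((σ : Equiv.Perm (Fin (N+1))) * c) * dsw F (N+1))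
          = fun σ : ↥(MulAction.stabilizer (Equiv.Perm (Fin (N+1))) i) =>
            brkW N (N+1) F ((σ : Equiv.Perm (Fin (N+1))) * c) := by
        funext σ; exact hmaster _
      rw [hcomp, hmaster g, hc]
      exact brk_mem_span F hi g
    obtain ⟨t, htT, hteq⟩ := hmap
    rwa [← hinj hteq]
  have hle : T ≤ LinearMap.range (PhiL F N i) := by
    rw [hT, Submodule.span_le]
    rintro _ ⟨σ, rfl⟩
    refine ⟨MonoidAlgebra.of F _ σ, ?_⟩
    rw [PhiL_apply, kapL_of, ← mul_assoc, ← map_mul]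
  exact hle hmem

end Final

/-- For every `n ≥ 2` and every field `F`, the restriction of the Lie module
`Lie_F(n) = F𝔖_n·ω_n` to the subgroup `𝔖_{n−1} ≤ 𝔖_n` (the stabilizer of the last
point) is isomorphic to the regular `F𝔖_{n−1}`-module: there is an `F`-linear
equivalence intertwining the `𝔖_{n-1}`-actions. -/
theorem dsw_ideal_restriction_regular (F : Type*) [Field F] (n : ℕ) (hn : 2 ≤ n) (i : Fin n)
    (hi : (i : ℕ) = n - 1) :
    ∃ e : MonoidAlgebra F ↥(MulAction.stabilizer (Equiv.Perm (Fin n)) i) ≃ₗ[F]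
        ↥((Submodule.span (MonoidAlgebra F (Equiv.Perm (Fin n))) {dsw F n}).restrictScalars F),
      ∀ (h : MulAction.stabilizer (Equiv.Perm (Fin n)) i)
        (x : MonoidAlgebra F ↥(MulAction.stabilizer (Equiv.Perm (Fin n)) i)),
        (e (MonoidAlgebra.of F ↥(MulAction.stabilizer (Equiv.Perm (Fin n)) i) h * x) :
            MonoidAlgebra F (Equiv.Perm (Fin n))) =
          MonoidAlgebra.of F (Equiv.Perm (Fin n)) (h : Equiv.Perm (Fin n)) *
            (e x : MonoidAlgebra F (Equiv.Perm (Fin n))) := by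
  classical
  obtain ⟨N, rfl⟩ : ∃ N, n = N + 1 := ⟨n - 1, by omega⟩
  have hi' : (i : ℕ) = N := by simpa using hi
  set M := (Submodule.span (MonoidAlgebra F (Equiv.Perm (Fin (N+1)))) {dsw F (N+1)}).restrictScalars F
    with hM
  have hmemM : ∀ x, PhiL F N i x ∈ M := by
    intro x
    rw [hM, Submodule.restrictScalars_mem, Submodule.mem_span_singleton]
    refine ⟨kapL F i x * MonoidAlgebra.of F _ (Fin.cycleRange i)⁻¹, ?_⟩
    rw [smul_eq_mul, PhiL_apply, mul_assoc]
  set Φ' : MonoidAlgebra F ↥(MulAction.stabilizer (Equiv.Perm (Fin (N+1))) i) →ₗ[F] ↥M :=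
    (PhiL F N i).codRestrict M hmemM with hΦ'
  have hval : ∀ x, ((Φ' x : MonoidAlgebra F (Equiv.Perm (Fin (N+1))))) = PhiL F N i x :=
    fun x => rfl
  have hinj : Function.Injective Φ' := by
    intro a b hab
    apply PhiL_injective F hi'
    rw [← hval a, ← hval b, hab]
  have hsurj : Function.Surjective Φ' := by
    rintro ⟨y, hy⟩
    rw [Submodule.restrictScalars_mem, Submodule.mem_span_singleton] at hy
    obtain ⟨a, ha⟩ := hy
    have hmemrange : ∀ a : MonoidAlgebra F (Equiv.Perm (Fin (N+1))),
        a * dsw F (N+1) ∈ LinearMap.range (PhiL F N i) := by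
      intro a
      induction a using MonoidAlgebra.induction_linear with
      | zero => rw [zero_mul]; exact Submodule.zero_mem _
      | add f g hf hg => rw [add_mul]; exact Submodule.add_mem _ hf hg
      | single g b =>
        have hsingle : (MonoidAlgebra.single g b : MonoidAlgebra F (Equiv.Perm (Fin (N+1))))
            = b • MonoidAlgebra.of F (Equiv.Perm (Fin (N+1))) g := by
          rw [MonoidAlgebra.of_apply, MonoidAlgebra.smul_single, smul_eq_mul, mul_one]
        rw [hsingle, smul_mul_assoc]
        exact Submodule.smul_mem _ b (of_mul_dsw_mem_range F hi' g)
    obtain ⟨x, hx⟩ := hmemrange a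
    refine ⟨x, ?_⟩
    apply Subtype.ext
    rw [hval x, hx, ← smul_eq_mul, ha]
  refine ⟨LinearEquiv.ofBijective Φ' (⟨hinj, hsurj⟩ : Function.Bijective Φ'), ?_⟩
  intro h x
  show ((Φ' (MonoidAlgebra.of F _ h * x) : ↥M) : MonoidAlgebra F (Equiv.Perm (Fin (N+1)))) =
    MonoidAlgebra.of F (Equiv.Perm (Fin (N+1))) (h : Equiv.Perm (Fin (N+1))) *
      ((Φ' x : ↥M) : MonoidAlgebra F (Equiv.Perm (Fin (N+1))))
  rw [hval, hval]
  exact PhiL_of_mul F i h x
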